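/- Let R(s) = Σ_{i=1}^n R_i(s) e^{-h_i s} be a neutral-type delay system as above with ξ_i = lim_{ω→∞} R_i(jω)/R_1(jω), and suppose the polynomial φ(r) = 1 + Σ_{i=2}^n ξ_i r^{h_i − h_1} (integer delays h_i) has a root r_0 with |r_0| < 1 and additionally each R_i has no poles in Re(s) ≥ 0. Then R has infinitely many zeros in the open right half-plane Re(s) > 0. More precisely, the zeros of R in the strip {0 < Re(s) < −ln|r_0| + 1} form an infinite set. -/

import Mathlib

open Complex Polynomial Filter Finset

/-- The `i`-th rational term `R_i(s) = p_i(s)/q_i(s)` viewed as a function on `ℂ`. -/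
noncomputable def ratTerm {n : ℕ} (p q : Fin n → Polynomial ℝ) (i : Fin n) (s : ℂ) : ℂ :=
  ((p i).map (algebraMap ℝ ℂ)).eval s / ((q i).map (algebraMap ℝ ℂ)).eval s

/-- The delay system `R(s) = ∑ᵢ R_i(s) e^{-h_i s}` with integer delays. -/
noncomputable def delaySys {n : ℕ} (p q : Fin n → Polynomial ℝ) (h : Fin n → ℕ) (s : ℂ) : ℂ :=
  ∑ i : Fin n, ratTerm p q i s * Complex.exp (-(h i : ℂ) * s)

open Bornology Metric
set_option maxHeartbeats 1000000



lemma lemA (P : Polynomial ℂ) (b : ℕ) (hb : P.natDegree ≤ b) :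
    Tendsto (fun z : ℂ => P.eval z / z ^ b) (cobounded ℂ) (nhds (P.coeff b)) := by
  have hinv : Tendsto (fun z : ℂ => z⁻¹) (cobounded ℂ) (nhds 0) := tendsto_inv₀_cobounded
  have hcont : Tendsto (fun w : ℂ => ∑ k ∈ Finset.range (b+1), P.coeff k * w ^ (b - k))
      (nhds 0) (nhds (P.coeff b)) := by
    have : Continuous (fun w : ℂ => ∑ k ∈ Finset.range (b+1), P.coeff k * w ^ (b - k)) := by
      continuity
    have h0 : (∑ k ∈ Finset.range (b+1), P.coeff k * (0:ℂ) ^ (b - k)) = P.coeff b := by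
      rw [Finset.sum_eq_single b]
      · simp
      · intro k hk hkb
        have : k < b := lt_of_le_of_ne (Nat.lt_succ_iff.mp (Finset.mem_range.mp hk)) hkb
        simp [Nat.sub_ne_zero_of_lt this]
      · simp
    simpa [h0] using this.tendsto 0
  have := hcont.comp hinv
  refine this.congr' ?_
  filter_upwards [eventually_cobounded_le_norm (1:ℝ)] with z hz
  have hz0 : z ≠ 0 := by
    intro h; rw [h] at hz; simp at hz; linarith
  rw [Function.comp]
  rw [Polynomial.eval_eq_sum_range' (Nat.lt_succ_of_le hb), Finset.sum_div]
  refine Finset.sum_congr rfl fun k hk => ?_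
  have hk' : k ≤ b := Nat.lt_succ_iff.mp (Finset.mem_range.mp hk)
  rw [inv_pow, ← div_eq_mul_inv]
  field_simp
  rw [mul_assoc, ← pow_add, Nat.sub_add_cancel hk']

lemma lemD (Q : Polynomial ℂ) (hQ : Q ≠ 0) : ∀ᶠ z in cobounded ℂ, Q.eval z ≠ 0 := by
  have h := (lemA Q Q.natDegree le_rfl).eventually_ne
    (by rw [Polynomial.coeff_natDegree]; exact Polynomial.leadingCoeff_ne_zero.mpr hQ)
  filter_upwards [h] with z hz h0
  exact hz (by simp [h0])

lemma lemB (P Q : Polynomial ℂ) (hQ : Q ≠ 0) (hdeg : P.natDegree ≤ Q.natDegree) :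
    Tendsto (fun z : ℂ => P.eval z / Q.eval z) (cobounded ℂ)
      (nhds (P.coeff Q.natDegree / Q.leadingCoeff)) := by
  have hA := lemA P Q.natDegree hdeg
  have hB := lemA Q Q.natDegree le_rfl
  have hlead : Q.leadingCoeff ≠ 0 := Polynomial.leadingCoeff_ne_zero.mpr hQ
  have := hA.div hB (by rw [Polynomial.coeff_natDegree]; exact hlead)
  rw [show P.coeff Q.natDegree / Q.leadingCoeff = P.coeff Q.natDegree / Q.coeff Q.natDegree by
    rw [Polynomial.coeff_natDegree]]
  refine this.congr' ?_
  filter_upwards [eventually_cobounded_le_norm (1:ℝ)] with z hz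
  have hz0 : (z : ℂ) ^ Q.natDegree ≠ 0 := by
    refine pow_ne_zero _ fun h => ?_
    rw [h] at hz; simp at hz; linarith
  simp only [Pi.div_apply]
  rw [div_div_div_comm, div_self hz0, div_one]

lemma lemC (P Q : Polynomial ℂ) (hP : P ≠ 0) (hQ0 : Q ≠ 0) (hdeg : Q.natDegree < P.natDegree)
    {α : Type*} {l : Filter α} {f : α → ℂ} (hf : Tendsto f l (cobounded ℂ)) :
    Tendsto (fun x => ‖P.eval (f x) / Q.eval (f x)‖) l atTop := by
  have hA : Tendsto (fun x => ‖P.eval (f x) / (f x) ^ P.natDegree‖) l (nhds ‖P.leadingCoeff‖) :=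
    (((lemA P P.natDegree le_rfl).comp hf).norm)
  have hB : Tendsto (fun x => ‖Q.eval (f x) / (f x) ^ P.natDegree‖) l (nhds 0) := by
    have := ((lemA Q P.natDegree hdeg.le).comp hf).norm
    simpa [Polynomial.coeff_eq_zero_of_natDegree_lt hdeg] using this
  have hlead : (0:ℝ) < ‖P.leadingCoeff‖ :=
    norm_pos_iff.mpr (Polynomial.leadingCoeff_ne_zero.mpr hP)
  have hev : ∀ᶠ x in l, 0 < ‖Q.eval (f x) / (f x) ^ P.natDegree‖ := by
    filter_upwards [hf.eventually (lemD Q hQ0), hf.eventually (eventually_cobounded_le_norm (1:ℝ))]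
      with x h1 h2
    have : f x ≠ 0 := by intro h; rw [h] at h2; simp at h2; linarith
    exact norm_pos_iff.mpr (div_ne_zero h1 (pow_ne_zero _ this))
  have hBW : Tendsto (fun x => ‖Q.eval (f x) / (f x) ^ P.natDegree‖) l (nhdsWithin 0 (Set.Ioi 0)) :=
    tendsto_nhdsWithin_of_tendsto_nhds_of_eventually_within _ hB hev
  have hinv : Tendsto (fun x => ‖Q.eval (f x) / (f x) ^ P.natDegree‖⁻¹) l atTop :=
    hBW.inv_tendsto_nhdsGT_zero
  have := hA.pos_mul_atTop hlead hinv
  refine this.congr' ?_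
  filter_upwards [hf.eventually (eventually_cobounded_le_norm (1:ℝ))] with x hx
  have hfx : f x ≠ 0 := by intro h; rw [h] at hx; simp at hx; linarith
  have hz0 : ‖(f x) ^ P.natDegree‖ ≠ 0 := by
    simpa using pow_ne_zero P.natDegree hfx
  rw [← div_eq_mul_inv, norm_div, norm_div, div_div_div_comm, div_self hz0, div_one, norm_div]

lemma ratio_div_eq (a b c e : ℂ) : (a / b) / (c / e) = (a * e) / (b * c) := by
  simp only [div_eq_mul_inv, mul_inv, inv_inv]; ring


/-- if the polynomial `φ` associated with a neutral-type delay system has a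
root `r₀` of modulus `< 1` (and the `R_i` have no poles in `Re s ≥ 0`), then `R` has
infinitely many zeros with `Re s > 0`; more precisely, infinitely many in the strip
`0 < Re s < -ln|r₀| + 1`. -/
theorem stmt2 (n : ℕ) (hn : 0 < n) (p q : Fin n → Polynomial ℝ) (h : Fin n → ℕ)
    (i0 : Fin n) (hi0 : i0 = ⟨0, hn⟩)
    (hmono : StrictMono h)
    (hstable : ∀ i, ∀ z : ℂ, 0 ≤ z.re → ((q i).map (algebraMap ℝ ℂ)).eval z ≠ 0)
    (hproper : ∀ i, (p i).natDegree ≤ (q i).natDegree)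
    (hp1 : p i0 ≠ 0)
    (d : Fin n → ℕ) (hd : ∀ i, d i = (q i).natDegree - (p i).natDegree)
    (hneutral : d i0 = (Finset.univ.erase i0).sup d)
    (ξ : Fin n → ℂ)
    (hξ : ∀ i, Tendsto (fun ω : ℝ => ratTerm p q i (Complex.I * ω) /
        ratTerm p q i0 (Complex.I * ω)) atTop (nhds (ξ i)))
    (r₀ : ℂ) (hr₀ : ‖r₀‖ < 1)
    (hroot : 1 + ∑ i ∈ Finset.univ.erase i0, ξ i * r₀ ^ (h i - h i0) = 0) :
    {s : ℂ | 0 < s.re ∧ s.re < -Real.log (‖r₀‖) + 1 ∧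
        delaySys p q h s = 0}.Infinite ∧
    {s : ℂ | 0 < s.re ∧ delaySys p q h s = 0}.Infinite := by
  classical
  have halg : Function.Injective (algebraMap ℝ ℂ) := (algebraMap ℝ ℂ).injective
  -- basic facts
  have hle : ∀ i, h i0 ≤ h i := fun i =>
    hmono.monotone (by rw [hi0]; exact Fin.mk_le_of_le_val (Nat.zero_le _))
  have hm1 : ∀ i, i ≠ i0 → 1 ≤ h i - h i0 := by
    intro i hi
    have hlt : i0 < i := by
      rw [hi0]
      refine lt_of_le_of_ne (Fin.mk_le_of_le_val (Nat.zero_le _)) ?_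
      rw [← hi0]; exact Ne.symm hi
    have := hmono hlt
    omega
  have hqc0 : ∀ i, (q i).map (algebraMap ℝ ℂ) ≠ 0 := by
    intro i hzero
    exact hstable i 1 (by norm_num) (by rw [hzero]; simp)
  have hpc0 : (p i0).map (algebraMap ℝ ℂ) ≠ 0 := by
    simpa using (Polynomial.map_ne_zero_iff halg).mpr hp1
  -- r₀ ≠ 0
  have hr0ne : r₀ ≠ 0 := by
    intro hzero
    rw [hzero] at hroot
    rw [Finset.sum_eq_zero (fun i hi => by
      rw [zero_pow (by have := hm1 i (Finset.ne_of_mem_erase hi); omega), mul_zero])] at hroot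
    norm_num at hroot
  -- the cobounded limits
  have hcob : ∀ i, Tendsto (fun z : ℂ =>
      (((p i).map (algebraMap ℝ ℂ)) * ((q i0).map (algebraMap ℝ ℂ))).eval z /
      (((q i).map (algebraMap ℝ ℂ)) * ((p i0).map (algebraMap ℝ ℂ))).eval z)
      (cobounded ℂ) (nhds (ξ i)) := by
    intro i
    have hQq0 : (q i).map (algebraMap ℝ ℂ) * (p i0).map (algebraMap ℝ ℂ) ≠ 0 :=
      mul_ne_zero (hqc0 i) hpc0
    have hpath : Tendsto (fun ω : ℝ => Complex.I * (ω : ℂ)) atTop (cobounded ℂ) := by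
      rw [← tendsto_norm_atTop_iff_cobounded]
      have heq : (fun ω : ℝ => ‖Complex.I * (ω : ℂ)‖) = fun ω : ℝ => |ω| := by
        funext ω; simp
      rw [heq]
      exact tendsto_abs_atTop_atTop
    have hratio : ∀ z : ℂ, ratTerm p q i z / ratTerm p q i0 z =
        ((p i).map (algebraMap ℝ ℂ) * (q i0).map (algebraMap ℝ ℂ)).eval z /
        ((q i).map (algebraMap ℝ ℂ) * (p i0).map (algebraMap ℝ ℂ)).eval z := by
      intro z
      simp only [ratTerm, Polynomial.eval_mul]
      exact ratio_div_eq _ _ _ _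
    have hξ' : Tendsto (fun ω : ℝ =>
        ((p i).map (algebraMap ℝ ℂ) * (q i0).map (algebraMap ℝ ℂ)).eval (Complex.I * ω) /
        ((q i).map (algebraMap ℝ ℂ) * (p i0).map (algebraMap ℝ ℂ)).eval (Complex.I * ω))
        atTop (nhds (ξ i)) := (hξ i).congr fun ω => hratio _
    by_cases hPp0 : (p i).map (algebraMap ℝ ℂ) * (q i0).map (algebraMap ℝ ℂ) = 0
    · have h0 : Tendsto (fun ω : ℝ =>
          ((p i).map (algebraMap ℝ ℂ) * (q i0).map (algebraMap ℝ ℂ)).eval (Complex.I * ω) /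
          ((q i).map (algebraMap ℝ ℂ) * (p i0).map (algebraMap ℝ ℂ)).eval (Complex.I * ω))
          atTop (nhds 0) := by simpa [hPp0] using tendsto_const_nhds
      have hz : ξ i = 0 := tendsto_nhds_unique hξ' h0
      rw [hz, hPp0]
      simpa using tendsto_const_nhds
    · rcases le_or_gt ((p i).map (algebraMap ℝ ℂ) * (q i0).map (algebraMap ℝ ℂ)).natDegree
        ((q i).map (algebraMap ℝ ℂ) * (p i0).map (algebraMap ℝ ℂ)).natDegree with hdeg | hdeg
      · have hlim := lemB _ _ hQq0 hdeg
        have hz : ξ i = _ := tendsto_nhds_unique hξ' (hlim.comp hpath)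
        rw [hz]; exact hlim
      · exfalso
        have := lemC _ _ hPp0 hQq0 hdeg hpath
        exact not_tendsto_atTop_of_tendsto_nhds hξ'.norm this
  -- normalized function F
  set F : ℂ → ℂ := fun z => ∑ i : Fin n,
    (((p i).map (algebraMap ℝ ℂ)) * ((q i0).map (algebraMap ℝ ℂ))).eval z /
    (((q i).map (algebraMap ℝ ℂ)) * ((p i0).map (algebraMap ℝ ℂ))).eval z *
    Complex.exp (-((h i - h i0 : ℕ) : ℂ) * z) with hF_def
  -- factorization
  have hfact : ∀ z : ℂ, 0 ≤ z.re → ((p i0).map (algebraMap ℝ ℂ)).eval z ≠ 0 →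
      delaySys p q h z = ratTerm p q i0 z * Complex.exp (-(h i0 : ℂ) * z) * F z := by
    intro z hz hpz
    simp only [hF_def, delaySys]
    rw [Finset.mul_sum]
    refine Finset.sum_congr rfl fun i _ => ?_
    have hq1 : ((q i).map (algebraMap ℝ ℂ)).eval z ≠ 0 := hstable i z hz
    have hq0 : ((q i0).map (algebraMap ℝ ℂ)).eval z ≠ 0 := hstable i0 z hz
    have hexp : Complex.exp (-(h i0 : ℂ) * z) * Complex.exp (-((h i - h i0 : ℕ) : ℂ) * z)
        = Complex.exp (-(h i : ℂ) * z) := by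
      rw [← Complex.exp_add]
      congr 1
      have hcast : ((h i - h i0 : ℕ) : ℂ) = (h i : ℂ) - (h i0 : ℂ) := by
        have := hle i
        push_cast [this]
        ring
      rw [hcast]; ring
    have hrat : ratTerm p q i z = ratTerm p q i0 z *
        (((p i).map (algebraMap ℝ ℂ) * (q i0).map (algebraMap ℝ ℂ)).eval z /
        ((q i).map (algebraMap ℝ ℂ) * (p i0).map (algebraMap ℝ ℂ)).eval z) := by
      simp only [ratTerm, Polynomial.eval_mul]
      rw [div_mul_div_comm, div_eq_div_iff hq1 (mul_ne_zero hq0 (mul_ne_zero hq1 hpz))]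
      ring
    rw [hrat, ← hexp]
    ring
  -- target zero point
  set s₀ : ℂ := -Complex.log r₀ with hs₀_def
  set c : ℝ := -Real.log (‖r₀‖) with hc_def
  have hs₀re : s₀.re = c := by
    rw [hs₀_def, hc_def, Complex.neg_re, Complex.log_re]
  have hcpos : 0 < c := by
    rw [hc_def]
    have := Real.log_neg (norm_pos_iff.mpr hr0ne) hr₀
    linarith
  -- limit function g
  set g : ℂ → ℂ := fun s => 1 + ∑ i ∈ Finset.univ.erase i0,
    ξ i * Complex.exp (-((h i - h i0 : ℕ) : ℂ) * s) with hg_def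
  have hgdiff : Differentiable ℂ g := by
    have hsum : Differentiable ℂ (fun s : ℂ => ∑ i ∈ Finset.univ.erase i0,
        ξ i * Complex.exp (-((h i - h i0 : ℕ) : ℂ) * s)) :=
      Differentiable.fun_sum fun i _ => ((differentiable_id.const_mul _).cexp.const_mul _)
    exact hsum.const_add 1
  have hg0 : g s₀ = 0 := by
    have e : ∀ i ∈ Finset.univ.erase i0, ξ i * Complex.exp (-((h i - h i0 : ℕ) : ℂ) * s₀)
        = ξ i * r₀ ^ (h i - h i0) := by
      intro i hi
      congr 1
      rw [hs₀_def, show -((h i - h i0 : ℕ) : ℂ) * -Complex.log r₀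
          = ((h i - h i0 : ℕ) : ℂ) * Complex.log r₀ from by ring,
        Complex.exp_nat_mul, Complex.exp_log hr0ne]
    calc g s₀ = 1 + ∑ i ∈ Finset.univ.erase i0, ξ i * r₀ ^ (h i - h i0) := by
          rw [hg_def]; exact congrArg _ (Finset.sum_congr rfl e)
      _ = 0 := hroot
  -- g is not identically zero
  have hgne : ∃ x : ℂ, g x ≠ 0 := by
    have hsum : Tendsto (fun x : ℝ => ∑ i ∈ Finset.univ.erase i0,
        ξ i * Complex.exp (-((h i - h i0 : ℕ) : ℂ) * (x : ℂ))) atTop (nhds 0) := by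
      rw [show (0:ℂ) = ∑ i ∈ Finset.univ.erase i0, (0:ℂ) by simp]
      refine tendsto_finset_sum _ fun i hi => ?_
      rw [tendsto_zero_iff_norm_tendsto_zero]
      have heq : (fun x : ℝ => ‖ξ i * Complex.exp (-((h i - h i0 : ℕ) : ℂ) * (x : ℂ))‖)
          = fun x : ℝ => ‖ξ i‖ * Real.exp (-((h i - h i0 : ℕ) : ℝ) * x) := by
        funext x
        rw [norm_mul, Complex.norm_exp]
        congr 2
        simp
      rw [heq, show (0:ℝ) = ‖ξ i‖ * 0 by ring]
      refine Tendsto.const_mul _ (Real.tendsto_exp_atBot.comp ?_)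
      have hpos : (0:ℝ) < ((h i - h i0 : ℕ) : ℝ) := by
        exact_mod_cast hm1 i (Finset.ne_of_mem_erase hi)
      exact (tendsto_id (α := ℝ)).const_mul_atTop_of_neg (neg_neg_iff_pos.mpr hpos)
    have htend : Tendsto (fun x : ℝ => g (x : ℂ)) atTop (nhds 1) := by
      have := hsum.const_add (1:ℂ)
      simpa [hg_def] using this
    obtain ⟨x, hx⟩ := (htend.eventually_ne one_ne_zero).exists
    exact ⟨(x : ℂ), hx⟩
  -- isolated zero: radius ρ₁
  obtain ⟨ρ₁, hρ₁pos, hρ₁⟩ : ∃ ρ₁ > 0, ∀ z : ℂ, dist z s₀ < ρ₁ → z ≠ s₀ → g z ≠ 0 := by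
    rcases (hgdiff.analyticAt s₀).eventually_eq_zero_or_eventually_ne_zero with hev | hev
    · exfalso
      obtain ⟨x, hx⟩ := hgne
      have : Set.EqOn g 0 Set.univ := by
        refine AnalyticOnNhd.eqOn_zero_of_preconnected_of_eventuallyEq_zero
          (fun z _ => hgdiff.analyticAt z) isPreconnected_univ (Set.mem_univ s₀) ?_
        exact hev
      exact hx (this (Set.mem_univ x))
    · rw [eventually_nhdsWithin_iff] at hev
      rw [Metric.eventually_nhds_iff] at hev
      obtain ⟨ρ₁, hρ₁pos, hρ₁⟩ := hev
      exact ⟨ρ₁, hρ₁pos, fun z h1 h2 => hρ₁ h1 h2⟩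
  -- choice of ρ
  set ρ : ℝ := min (min (ρ₁ / 2) (c / 2)) (1 / 2) with hρ_def
  have hρpos : 0 < ρ := by
    rw [hρ_def]
    refine lt_min (lt_min ?_ ?_) ?_ <;> positivity
  have hρ_lt_ρ₁ : ρ < ρ₁ := lt_of_le_of_lt (le_trans (min_le_left _ _) (min_le_left _ _))
    (by linarith)
  have hρ_le_c2 : ρ ≤ c / 2 := le_trans (min_le_left _ _) (min_le_right _ _)
  have hρ_le_half : ρ ≤ 1 / 2 := min_le_right _ _
  -- minimum of ‖g‖ on the sphere
  obtain ⟨ε, hεpos, hsph⟩ : ∃ ε > 0, ∀ z ∈ Metric.sphere s₀ ρ, ε ≤ ‖g z‖ := by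
    have hcomp : IsCompact (Metric.sphere s₀ ρ) := isCompact_sphere s₀ ρ
    have hne : (Metric.sphere s₀ ρ).Nonempty := NormedSpace.sphere_nonempty.mpr hρpos.le
    obtain ⟨z₀, hz₀mem, hz₀min⟩ := hcomp.exists_isMinOn hne
      (continuous_norm.comp hgdiff.continuous).continuousOn
    refine ⟨‖g z₀‖, ?_, fun z hz => hz₀min hz⟩
    refine norm_pos_iff.mpr ?_
    refine hρ₁ z₀ ?_ ?_
    · rw [mem_sphere_iff_norm] at hz₀mem
      rw [dist_eq_norm, hz₀mem]
      exact hρ_lt_ρ₁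
    · intro hzeq
      rw [mem_sphere_iff_norm, hzeq] at hz₀mem
      simp at hz₀mem
      exact hρpos.ne hz₀mem
  -- translations
  set t : ℕ → ℂ := fun k => (2 * Real.pi * k) * Complex.I with ht_def
  -- uniform approximation ∃ K
  obtain ⟨K, hK⟩ : ∃ K : ℕ, ∀ k : ℕ, K ≤ k → ∀ s ∈ Metric.closedBall s₀ ρ,
      ‖F (s + t k) - g s‖ ≤ ε / 4 ∧ ((p i0).map (algebraMap ℝ ℂ)).eval (s + t k) ≠ 0 := by
    haveI : Nonempty (Fin n) := ⟨i0⟩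
    have hev2 : ∀ i : Fin n, ∃ M : ℝ, ∀ z : ℂ, M ≤ ‖z‖ →
        ‖((p i).map (algebraMap ℝ ℂ) * (q i0).map (algebraMap ℝ ℂ)).eval z /
          ((q i).map (algebraMap ℝ ℂ) * (p i0).map (algebraMap ℝ ℂ)).eval z - ξ i‖
          < ε / (4 * n) := by
      intro i
      have hnpos : (0:ℝ) < n := by exact_mod_cast hn
      have hball := (hcob i).eventually (Metric.ball_mem_nhds (ξ i)
        (by positivity : (0:ℝ) < ε / (4 * n)))
      rw [← comap_norm_atTop, eventually_comap, eventually_atTop] at hball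
      obtain ⟨M, hM⟩ := hball
      refine ⟨M, fun z hz => ?_⟩
      have := hM ‖z‖ hz z rfl
      simpa [Metric.mem_ball, dist_eq_norm] using this
    choose M hM using hev2
    have hev0 := lemD _ hpc0
    rw [← comap_norm_atTop, eventually_comap, eventually_atTop] at hev0
    obtain ⟨M₀, hM₀⟩ := hev0
    set Mb : ℝ := M₀ ⊔ Finset.univ.sup' Finset.univ_nonempty M with hMb_def
    have hπ : (0:ℝ) < 2 * Real.pi := by positivity
    obtain ⟨K, hKge⟩ := exists_nat_ge ((Mb + ‖s₀‖ + ρ + 1) / (2 * Real.pi))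
    refine ⟨K, fun k hk s hs => ?_⟩
    -- norm lower bound on the translated point
    have htk : ‖t k‖ = 2 * Real.pi * k := by
      simp only [ht_def]
      have : ((2 : ℂ) * (Real.pi : ℂ) * (k : ℂ)) * Complex.I
          = ((2 * Real.pi * k : ℝ) : ℂ) * Complex.I := by push_cast; ring
      rw [this, norm_mul, Complex.norm_I, mul_one, Complex.norm_real, Real.norm_eq_abs,
        _root_.abs_of_nonneg (by positivity)]
    have hsnorm : ‖s‖ ≤ ‖s₀‖ + ρ := by
      have h1 : ‖s - s₀‖ ≤ ρ := by
        rw [← dist_eq_norm]; exact Metric.mem_closedBall.mp hs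
      calc ‖s‖ = ‖(s - s₀) + s₀‖ := by ring_nf
        _ ≤ ‖s - s₀‖ + ‖s₀‖ := norm_add_le _ _
        _ ≤ ‖s₀‖ + ρ := by linarith
    have hnormw : Mb + 1 ≤ ‖s + t k‖ := by
      have h2 : ‖t k‖ ≤ ‖s + t k‖ + ‖s‖ := by
        calc ‖t k‖ = ‖(s + t k) - s‖ := by ring_nf
          _ ≤ ‖s + t k‖ + ‖s‖ := norm_sub_le _ _
      have h3 : Mb + ‖s₀‖ + ρ + 1 ≤ 2 * Real.pi * K := by
        rw [div_le_iff₀ hπ] at hKge; linarith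
      have h4 : (2:ℝ) * Real.pi * K ≤ 2 * Real.pi * k := by
        have : (K:ℝ) ≤ k := by exact_mod_cast hk
        nlinarith [Real.pi_pos]
      rw [htk] at h2
      linarith
    -- real part facts
    have hwre : (s + t k).re = s.re := by simp only [ht_def]; simp
    have hsre : c - ρ ≤ s.re := by
      have h1 : |(s - s₀).re| ≤ ‖s - s₀‖ := Complex.abs_re_le_norm _
      have h2 : ‖s - s₀‖ ≤ ρ := by
        rw [← Complex.dist_eq]; exact Metric.mem_closedBall.mp hs
      have h3 : (s - s₀).re = s.re - s₀.re := by simp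
      rw [h3] at h1
      rw [← hs₀re]
      cases abs_le.mp (le_trans h1 h2) with
      | intro hl hr => linarith
    have hsre0 : 0 ≤ s.re := by linarith [hρ_le_c2, hcpos]
    have hwre0 : 0 ≤ (s + t k).re := by rw [hwre]; exact hsre0
    -- nonvanishing at the translated point
    have hpw : ((p i0).map (algebraMap ℝ ℂ)).eval (s + t k) ≠ 0 := by
      refine hM₀ ‖s + t k‖ ?_ _ rfl
      calc M₀ ≤ Mb := le_max_left _ _
        _ ≤ Mb + 1 := by linarith
        _ ≤ ‖s + t k‖ := hnormw
    refine ⟨?_, hpw⟩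
    have hqw : ∀ j, ((q j).map (algebraMap ℝ ℂ)).eval (s + t k) ≠ 0 :=
      fun j => hstable j _ hwre0
    -- split the sum
    have hsplit : F (s + t k) = 1 + ∑ i ∈ Finset.univ.erase i0,
        ((p i).map (algebraMap ℝ ℂ) * (q i0).map (algebraMap ℝ ℂ)).eval (s + t k) /
        ((q i).map (algebraMap ℝ ℂ) * (p i0).map (algebraMap ℝ ℂ)).eval (s + t k) *
        Complex.exp (-((h i - h i0 : ℕ) : ℂ) * s) := by
      simp only [hF_def]
      rw [← Finset.add_sum_erase _ _ (Finset.mem_univ i0)]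
      congr 1
      · rw [Nat.sub_self]
        simp only [Nat.cast_zero, neg_zero, zero_mul, Complex.exp_zero, mul_one]
        rw [Polynomial.eval_mul, Polynomial.eval_mul,
          mul_comm (((q i0).map (algebraMap ℝ ℂ)).eval (s + t k))
            (((p i0).map (algebraMap ℝ ℂ)).eval (s + t k)),
          div_self (mul_ne_zero hpw (hqw i0))]
      · refine Finset.sum_congr rfl fun i hi => ?_
        congr 1
        rw [show -((h i - h i0 : ℕ) : ℂ) * (s + t k)
            = -((h i - h i0 : ℕ) : ℂ) * s + -((h i - h i0 : ℕ) : ℂ) * t k by ring,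
          Complex.exp_add]
        have hone : Complex.exp (-((h i - h i0 : ℕ) : ℂ) * t k) = 1 := by
          rw [Complex.exp_eq_one_iff]
          exact ⟨-(((h i - h i0) * k : ℕ) : ℤ), by simp only [ht_def]; push_cast; ring⟩
        rw [hone, mul_one]
    -- difference and bound
    have hdiff : F (s + t k) - g s = ∑ i ∈ Finset.univ.erase i0,
        (((p i).map (algebraMap ℝ ℂ) * (q i0).map (algebraMap ℝ ℂ)).eval (s + t k) /
        ((q i).map (algebraMap ℝ ℂ) * (p i0).map (algebraMap ℝ ℂ)).eval (s + t k) - ξ i) *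
        Complex.exp (-((h i - h i0 : ℕ) : ℂ) * s) := by
      rw [hsplit]
      simp only [hg_def]
      rw [add_sub_add_left_eq_sub, ← Finset.sum_sub_distrib]
      exact Finset.sum_congr rfl fun i hi => by rw [← sub_mul]
    have hnpos : (0:ℝ) < n := by exact_mod_cast hn
    have hterm : ∀ i ∈ Finset.univ.erase i0,
        ‖(((p i).map (algebraMap ℝ ℂ) * (q i0).map (algebraMap ℝ ℂ)).eval (s + t k) /
        ((q i).map (algebraMap ℝ ℂ) * (p i0).map (algebraMap ℝ ℂ)).eval (s + t k) - ξ i) *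
        Complex.exp (-((h i - h i0 : ℕ) : ℂ) * s)‖ ≤ ε / (4 * n) := by
      intro i hi
      rw [norm_mul]
      have h1 := hM i (s + t k) (by
        calc M i ≤ Finset.univ.sup' Finset.univ_nonempty M := Finset.le_sup' M (Finset.mem_univ i)
          _ ≤ Mb := le_max_right _ _
          _ ≤ Mb + 1 := by linarith
          _ ≤ ‖s + t k‖ := hnormw)
      have h2 : ‖Complex.exp (-((h i - h i0 : ℕ) : ℂ) * s)‖ ≤ 1 := by
        rw [Complex.norm_exp]
        rw [Real.exp_le_one_iff]
        have hre : (-((h i - h i0 : ℕ) : ℂ) * s).re = -((h i - h i0 : ℕ) : ℝ) * s.re := by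
          simp [Complex.mul_re]
        rw [hre]
        have : (0:ℝ) ≤ ((h i - h i0 : ℕ) : ℝ) := Nat.cast_nonneg _
        nlinarith
      calc ‖_ - ξ i‖ * ‖Complex.exp (-((h i - h i0 : ℕ) : ℂ) * s)‖
          ≤ (ε / (4 * n)) * 1 := mul_le_mul h1.le h2 (norm_nonneg _) (by positivity)
        _ = ε / (4 * n) := mul_one _
    calc ‖F (s + t k) - g s‖
        = ‖∑ i ∈ Finset.univ.erase i0, _‖ := by rw [hdiff]
      _ ≤ ∑ i ∈ Finset.univ.erase i0,
          ‖(((p i).map (algebraMap ℝ ℂ) * (q i0).map (algebraMap ℝ ℂ)).eval (s + t k) /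
          ((q i).map (algebraMap ℝ ℂ) * (p i0).map (algebraMap ℝ ℂ)).eval (s + t k) - ξ i) *
          Complex.exp (-((h i - h i0 : ℕ) : ℂ) * s)‖ := norm_sum_le _ _
      _ ≤ ∑ i ∈ Finset.univ.erase i0, (ε / (4 * n)) := Finset.sum_le_sum hterm
      _ = ((Finset.univ.erase i0).card : ℝ) * (ε / (4 * n)) := by
          rw [Finset.sum_const, nsmul_eq_mul]
      _ ≤ (n : ℝ) * (ε / (4 * n)) := by
          refine mul_le_mul_of_nonneg_right ?_ (by positivity)
          rw [Finset.card_erase_of_mem (Finset.mem_univ i0), Finset.card_univ, Fintype.card_fin]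
          exact_mod_cast Nat.sub_le n 1
      _ = ε / 4 := by
          have hne : (n : ℝ) ≠ 0 := ne_of_gt hnpos
          field_simp
  -- existence of zeros of F in translated balls
  have hzeros : ∀ k : ℕ, K ≤ k → ∃ z ∈ Metric.closedBall s₀ ρ, F (z + t k) = 0 := by
    intro k hk
    by_contra hcon
    push_neg at hcon
    have hreB : ∀ z ∈ Metric.closedBall s₀ ρ, 0 ≤ (z + t k).re := by
      intro z hz
      have h1 : |(z - s₀).re| ≤ ‖z - s₀‖ := Complex.abs_re_le_norm _
      have h2 : ‖z - s₀‖ ≤ ρ := by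
        rw [← Complex.dist_eq]; exact Metric.mem_closedBall.mp hz
      have h3 : (z - s₀).re = z.re - s₀.re := by simp
      rw [h3] at h1
      have h4 : (z + t k).re = z.re := by simp [ht_def]
      rw [h4]
      have := abs_le.mp (le_trans h1 h2)
      rw [hs₀re] at this
      linarith [this.1, hρ_le_c2, hcpos]
    have hsub : ∀ z ∈ Metric.closedBall s₀ ρ, DifferentiableAt ℂ (fun w => F (w + t k)) z := by
      intro z hz
      have hqz : ∀ j, ((q j).map (algebraMap ℝ ℂ)).eval (z + t k) ≠ 0 :=
        fun j => hstable j _ (hreB z hz)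
      have hpz : ((p i0).map (algebraMap ℝ ℂ)).eval (z + t k) ≠ 0 := (hK k hk z hz).2
      have hFd : DifferentiableAt ℂ F (z + t k) := by
        rw [hF_def]
        refine DifferentiableAt.fun_sum fun i _ => DifferentiableAt.mul ?_ ?_
        · refine DifferentiableAt.div (Polynomial.differentiableAt _)
            (Polynomial.differentiableAt _) ?_
          rw [Polynomial.eval_mul]
          exact mul_ne_zero (hqz i) hpz
        · exact (differentiableAt_id.const_mul _).cexp
      exact DifferentiableAt.comp (g := F) (f := fun w => w + t k) z hFd (differentiableAt_id.add (differentiableAt_const _))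
    have hDonCl : DifferentiableOn ℂ (fun z => (F (z + t k))⁻¹) (Metric.closedBall s₀ ρ) :=
      fun z hz => (((hsub z hz).inv (hcon z hz)).differentiableWithinAt)
    have hdc : DiffContOnCl ℂ (fun z => (F (z + t k))⁻¹) (Metric.ball s₀ ρ) := by
      rw [← closure_ball s₀ hρpos.ne'] at hDonCl
      exact hDonCl.diffContOnCl
    have hmax : ‖(F (s₀ + t k))⁻¹‖ ≤ (ε / 2)⁻¹ := by
      refine Complex.norm_le_of_forall_mem_frontier_norm_le isBounded_ball hdc ?_ ?_
      · intro z hz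
        rw [frontier_ball s₀ hρpos.ne'] at hz
        have hzc : z ∈ Metric.closedBall s₀ ρ := sphere_subset_closedBall hz
        have h1 := (hK k hk z hzc).1
        have h2 := hsph z hz
        have h3 : ‖g z‖ - ‖F (z + t k)‖ ≤ ‖F (z + t k) - g z‖ := by
          calc ‖g z‖ - ‖F (z + t k)‖ ≤ ‖g z - F (z + t k)‖ := norm_sub_norm_le _ _
            _ = ‖F (z + t k) - g z‖ := norm_sub_rev _ _
        have hge : ε / 2 ≤ ‖F (z + t k)‖ := by linarith
        rw [norm_inv]
        exact inv_anti₀ (by positivity) hge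
      · rw [closure_ball s₀ hρpos.ne']
        exact Metric.mem_closedBall_self hρpos.le
    have hmem0 : s₀ ∈ Metric.closedBall s₀ ρ := Metric.mem_closedBall_self hρpos.le
    have hne0 : F (s₀ + t k) ≠ 0 := hcon s₀ hmem0
    have hpos0 : 0 < ‖F (s₀ + t k)‖ := norm_pos_iff.mpr hne0
    have hge0 : ε / 2 ≤ ‖F (s₀ + t k)‖ := by
      rw [norm_inv] at hmax
      have hεh : (0:ℝ) < ε / 2 := by positivity
      have h5 : ε / 2 * ‖F (s₀ + t k)‖⁻¹ ≤ ε / 2 * (ε / 2)⁻¹ :=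
        mul_le_mul_of_nonneg_left hmax hεh.le
      rw [mul_inv_cancel₀ hεh.ne'] at h5
      have h6 := mul_le_mul_of_nonneg_right h5 hpos0.le
      rw [one_mul, mul_assoc, inv_mul_cancel₀ hpos0.ne', mul_one] at h6
      exact h6
    have hsm : ‖F (s₀ + t k)‖ ≤ ε / 4 := by
      have := (hK k hk s₀ hmem0).1
      rwa [hg0, sub_zero] at this
    linarith
  -- conclude
  have hzfun : ∀ j : ℕ, ∃ z ∈ Metric.closedBall s₀ ρ, F (z + t (K + j)) = 0 :=
    fun j => hzeros (K + j) (Nat.le_add_right _ _)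
  choose zf hzf1 hzf2 using hzfun
  set w : ℕ → ℂ := fun j => zf j + t (K + j) with hw_def
  have hwre : ∀ j, (w j).re = (zf j).re := by
    intro j; simp [hw_def, ht_def]
  have hzre : ∀ j, c - ρ ≤ (zf j).re ∧ (zf j).re ≤ c + ρ := by
    intro j
    have h1 : |(zf j - s₀).re| ≤ ‖zf j - s₀‖ := Complex.abs_re_le_norm _
    have h2 : ‖zf j - s₀‖ ≤ ρ := by
      rw [← Complex.dist_eq]; exact Metric.mem_closedBall.mp (hzf1 j)
    have h3 : (zf j - s₀).re = (zf j).re - s₀.re := by simp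
    rw [h3, hs₀re] at h1
    have := abs_le.mp (le_trans h1 h2)
    exact ⟨by linarith [this.1], by linarith [this.2]⟩
  have hwmem : ∀ j, w j ∈ {s : ℂ | 0 < s.re ∧ s.re < c + 1 ∧ delaySys p q h s = 0} := by
    intro j
    have hre1 := (hzre j).1
    have hre2 := (hzre j).2
    refine ⟨?_, ?_, ?_⟩
    · rw [hwre j]; linarith [hρ_le_c2, hcpos]
    · rw [hwre j]; linarith [hρ_le_half]
    · have hpz := (hK (K + j) (Nat.le_add_right _ _) (zf j) (hzf1 j)).2
      have hre0 : 0 ≤ (w j).re := by rw [hwre j]; linarith [hρ_le_c2, hcpos]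
      rw [hw_def] at hre0 ⊢
      rw [hfact _ hre0 hpz, hzf2 j, mul_zero]
  have hinj : Function.Injective w := by
    intro a b hab
    have him_eq : ∀ j, (w j).im = (zf j).im + 2 * Real.pi * ((K : ℝ) + j) := by
      intro j
      simp [hw_def, ht_def]
    have hbnd : ∀ j, |(zf j).im - s₀.im| ≤ ρ := by
      intro j
      have h1 : |(zf j - s₀).im| ≤ ‖zf j - s₀‖ := Complex.abs_im_le_norm _
      have h2 : ‖zf j - s₀‖ ≤ ρ := by
        rw [← Complex.dist_eq]; exact Metric.mem_closedBall.mp (hzf1 j)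
      have h3 : (zf j - s₀).im = (zf j).im - s₀.im := by simp
      rw [h3] at h1
      linarith
    have him : (w a).im = (w b).im := by rw [hab]
    rw [him_eq a, him_eq b] at him
    have hA := abs_le.mp (hbnd a)
    have hB := abs_le.mp (hbnd b)
    by_contra hne
    have hπ3 := Real.pi_gt_three
    rcases Nat.lt_or_ge a b with hlt | hge
    · have h1 : (a : ℝ) + 1 ≤ b := by exact_mod_cast hlt
      nlinarith [hA.1, hA.2, hB.1, hB.2, hρ_le_half]
    · have hlt' : b < a := lt_of_le_of_ne hge (fun hcon => hne (hcon ▸ rfl))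
      have h1 : (b : ℝ) + 1 ≤ a := by exact_mod_cast hlt'
      nlinarith [hA.1, hA.2, hB.1, hB.2, hρ_le_half]
  have hinf1 : {s : ℂ | 0 < s.re ∧ s.re < c + 1 ∧ delaySys p q h s = 0}.Infinite :=
    Set.infinite_of_injective_forall_mem hinj hwmem
  refine ⟨hinf1, ?_⟩
  refine Set.Infinite.mono ?_ hinf1
  intro s hs
  exact ⟨hs.1, hs.2.2⟩
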